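/- (Borrowing values) Let σ_S be a non-idling schedule and σ_O any schedule of the same instance, and fix a reference time t ≥ 0; all quantities A(t), y_j, p_j(t), R_j refer to σ_S, and O(t) = {j ∈ J : r j ≤ t < C^O_j}. Then there exists a function β : J × J → ℝ with β(j,i) ≥ 0 for all j,i, such that: (i) β(j,i) = 0 unless j ∈ A(t)∖O(t), i ∈ O(t) and i ∈ R_j; (ii) ∑_{i∈O(t)} β(j,i) = p_j(t) for every j ∈ A(t)∖O(t); and (iii) ∑_{j∈A(t)∖O(t)} β(j,i) ≤ y_i(t) for every i ∈ O(t). -/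

import Mathlib

open MeasureTheory Set

open scoped Classical

noncomputable section

variable {J : Type*}

/-- Total work done on job `j` by time `u` under the schedule `σ`. -/
def workDone (σ : ℝ → J → ℝ) (j : J) (u : ℝ) : ℝ := ∫ v in (0:ℝ)..u, σ v j

/-- Remaining processing time of job `j` at time `u`. -/
def remT (p : J → ℝ) (σ : ℝ → J → ℝ) (j : J) (u : ℝ) : ℝ := p j - workDone σ j u

/-- Completion time of job `j`: the least `u` with `workDone σ j u = p j`,
    and `⊤` if the job never completes. -/
def cTime (p : J → ℝ) (σ : ℝ → J → ℝ) (j : J) : EReal :=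
  sInf ((fun v : ℝ => (v : EReal)) '' {v : ℝ | workDone σ j v = p j})

/-- Job `j` is available at time `u`: released and not yet completed. -/
def availAt (r p : J → ℝ) (σ : ℝ → J → ℝ) (u : ℝ) (j : J) : Prop :=
  r j ≤ u ∧ (u : EReal) < cTime p σ j

/-- Job `j` is processed at time `u`. -/
def procAt (σ : ℝ → J → ℝ) (u : ℝ) (j : J) : Prop := 0 < σ u j

/-- Job `j` is non-clairvoyant at time `u`. -/
def ncAt (r p : J → ℝ) (α : ℝ) (σ : ℝ → J → ℝ) (u : ℝ) (j : J) : Prop :=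
  availAt r p σ u j ∧ workDone σ j u ≤ α * p j

/-- Job `j` is clairvoyant at time `u`. -/
def clAt (r p : J → ℝ) (α : ℝ) (σ : ℝ → J → ℝ) (u : ℝ) (j : J) : Prop :=
  availAt r p σ u j ∧ α * p j < workDone σ j u

/-- The time at which job `j` emits its signal: the least `u` with
    `workDone σ j u = α * p j`. -/
def emitT (p : J → ℝ) (α : ℝ) (σ : ℝ → J → ℝ) (j : J) : ℝ :=
  sInf {u : ℝ | workDone σ j u = α * p j}

/-- Data of an instance: nonnegative release dates, positive processing times
    and `α ∈ (0,1)`. -/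
structure IsInstance (r p : J → ℝ) (α : ℝ) : Prop where
  r_nonneg : ∀ j, 0 ≤ r j
  p_pos : ∀ j, 0 < p j
  alpha_mem : α ∈ Set.Ioo (0 : ℝ) 1

/-- `σ` is a (feasible, preemptive, single machine) schedule. -/
structure IsSchedule [Fintype J] (r p : J → ℝ) (σ : ℝ → J → ℝ) : Prop where
  meas : ∀ j, Measurable fun u => σ u j
  nonneg : ∀ u j, 0 ≤ σ u j
  sum_le_one : ∀ u, ∑ j, σ u j ≤ 1
  zero_before_release : ∀ u j, u < r j → σ u j = 0
  workDone_le : ∀ u j, workDone σ j u ≤ p j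

/-- A schedule is non-idling if it uses the full machine capacity whenever
    some job is available. -/
def NonIdling [Fintype J] (r p : J → ℝ) (σ : ℝ → J → ℝ) : Prop :=
  ∀ u, (∃ j, availAt r p σ u j) → ∑ j, σ u j = 1

/-- The SRPT condition at time `u`: `Cl(u) ≠ ∅` and
    `min_{j ∈ Cl(u)} p_j(u) ≤ ((1-α)/α) · min_{j ∈ N(u)} y_j(u)`
    (the minimum over the empty set being `+∞`). -/
def SrptCond (r p : J → ℝ) (α : ℝ) (σ : ℝ → J → ℝ) (u : ℝ) : Prop :=
  ∃ k, clAt r p α σ u k ∧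
    ∀ j, ncAt r p α σ u j → remT p σ k u ≤ ((1 - α) / α) * workDone σ j u

/-- `k` is a clairvoyant job of minimal remaining processing time at `u`,
    emitting last among those. -/
def IsSrptChoice (r p : J → ℝ) (α : ℝ) (σ : ℝ → J → ℝ) (u : ℝ) (k : J) : Prop :=
  clAt r p α σ u k ∧
    (∀ j, clAt r p α σ u j → remT p σ k u ≤ remT p σ j u) ∧
    (∀ j, clAt r p α σ u j → remT p σ j u = remT p σ k u →
      emitT p α σ j ≤ emitT p α σ k)

/-- `j` is a non-clairvoyant job with minimal progress at time `u`. -/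
def IsMinNc (r p : J → ℝ) (α : ℝ) (σ : ℝ → J → ℝ) (u : ℝ) (j : J) : Prop :=
  ncAt r p α σ u j ∧ ∀ j', ncAt r p α σ u j' → workDone σ j u ≤ workDone σ j' u

/-- `σ` is an ALG-schedule: non-idling, and at any time with available jobs it
    either runs a single clairvoyant job of shortest remaining processing time
    (breaking ties by latest emission) when the SRPT condition holds, or it runs
    exactly the non-clairvoyant jobs of minimal progress at equal rates. -/
structure IsALG [Fintype J] (r p : J → ℝ) (α : ℝ) (σ : ℝ → J → ℝ) : Prop where
  sched : IsSchedule r p σ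
  nonidling : NonIdling r p σ
  srpt_branch : ∀ u, (∃ j, availAt r p σ u j) → SrptCond r p α σ u →
    ∃ k, IsSrptChoice r p α σ u k ∧ ∀ j, j ≠ k → σ u j = 0
  setf_branch : ∀ u, (∃ j, availAt r p σ u j) → ¬ SrptCond r p α σ u →
    (∀ j, procAt σ u j → IsMinNc r p α σ u j) ∧
    (∀ j j', IsMinNc r p α σ u j → IsMinNc r p α σ u j' → σ u j = σ u j')

/-- Right endpoint `min (C_j, t)` of the lifetime of `j` w.r.t. reference time `t`. -/
def lifeEnd (p : J → ℝ) (σ : ℝ → J → ℝ) (t : ℝ) (j : J) : ℝ :=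
  (min (cTime p σ j) (t : EReal)).toReal

/-- The lifetime `I_j = [r j, min (C_j, t)]` of job `j`. -/
def lifetime (r p : J → ℝ) (σ : ℝ → J → ℝ) (t : ℝ) (j : J) : Set ℝ :=
  Set.Icc (r j) (lifeEnd p σ t j)

/-- `E_N`-edge of the borrow graph: `i` is processed at some time of `I_j`
    while being non-clairvoyant. -/
def ENedge (r p : J → ℝ) (α : ℝ) (σ : ℝ → J → ℝ) (t : ℝ) (j i : J) : Prop :=
  ∃ u ∈ lifetime r p σ t j, procAt σ u i ∧ ncAt r p α σ u i

/-- `E_C`-edge of the borrow graph: `i` is processed at some time of `I_j`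
    while being clairvoyant. -/
def ECedge (r p : J → ℝ) (α : ℝ) (σ : ℝ → J → ℝ) (t : ℝ) (j i : J) : Prop :=
  ∃ u ∈ lifetime r p σ t j, procAt σ u i ∧ clAt r p α σ u i

/-- Edge of the borrow graph `G_B`. -/
def borrowEdge (r p : J → ℝ) (α : ℝ) (σ : ℝ → J → ℝ) (t : ℝ) (j i : J) : Prop :=
  ENedge r p α σ t j i ∨ ECedge r p α σ t j i

/-- `reaches j i` iff `i ∈ R_j`, i.e. `i` is reachable from `j` in the borrow
    graph (`j` itself included). -/
def reaches (r p : J → ℝ) (α : ℝ) (σ : ℝ → J → ℝ) (t : ℝ) : J → J → Prop :=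
  Relation.ReflTransGen (borrowEdge r p α σ t)

/-- Truncated progress `ȳ_j = min (y_j(t), α p_j)`. -/
def truncY (p : J → ℝ) (α : ℝ) (σ : ℝ → J → ℝ) (t : ℝ) (j : J) : ℝ :=
  min (workDone σ j t) (α * p j)

end

section Flow

variable {ι κ : Type*} [Fintype ι] [Fintype κ]

/-- Row-sum delta for the pumping argument. -/
noncomputable def rowd (j0 : ι) (v : ι ⊕ κ) (ε : ℝ) (a : ι) : ℝ :=
  match v with
  | .inl j => (if a = j0 then ε else 0) - (if a = j then ε else 0)
  | .inr _ => if a = j0 then ε else 0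

/-- Column-sum delta for the pumping argument. -/
noncomputable def cold (v : ι ⊕ κ) (ε : ℝ) (b : κ) : ℝ :=
  match v with
  | .inl _ => 0
  | .inr i => if b = i then ε else 0

/-- Alternating-path step relation. -/
def flowStep (Rel : ι → κ → Prop) (β : ι → κ → ℝ) : ι ⊕ κ → ι ⊕ κ → Prop
  | .inl j, .inr i => Rel j i
  | .inr i, .inl j => 0 < β j i
  | _, _ => False

private lemma delta_row (j : ι) (i : κ) (ε : ℝ) (a : ι) :
    ∑ b : κ, (if a = j ∧ b = i then ε else 0) = if a = j then ε else 0 := by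
  by_cases h : a = j
  · simp [h, Finset.sum_ite_eq']
  · simp [h]

private lemma delta_col (j : ι) (i : κ) (ε : ℝ) (b : κ) :
    ∑ a : ι, (if a = j ∧ b = i then ε else 0) = if b = i then ε else 0 := by
  by_cases h : b = i
  · simp [h, Finset.sum_ite_eq']
  · simp [h]

lemma pump (Rel : ι → κ → Prop) (β : ι → κ → ℝ) (j0 : ι)
    (hβ0 : ∀ a b, 0 ≤ β a b) (hsupp : ∀ a b, ¬ Rel a b → β a b = 0)
    {v : ι ⊕ κ} (h : Relation.ReflTransGen (flowStep Rel β) (.inl j0) v) :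
    ∃ C : ℝ, 0 ≤ C ∧ ∃ ε0 : ℝ, 0 < ε0 ∧ ∀ ε : ℝ, 0 < ε → ε < ε0 →
      ∃ β' : ι → κ → ℝ, (∀ a b, 0 ≤ β' a b) ∧ (∀ a b, ¬ Rel a b → β' a b = 0) ∧
        (∀ a b, β a b - C * ε ≤ β' a b) ∧
        (∀ a, ∑ b, β' a b = ∑ b, β a b + rowd j0 v ε a) ∧
        (∀ b, ∑ a, β' a b = ∑ a, β a b + cold v ε b) := by
  induction h with
  | refl =>
    refine ⟨0, le_refl _, 1, one_pos, fun ε hε hε1 => ⟨β, hβ0, hsupp, ?_, ?_, ?_⟩⟩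
    · intro a b; simp
    · intro a; simp [rowd]
    · intro b; simp [cold]
  | @tail b c hpre e ih =>
    match b, c, e, ih, hpre with
    | .inl j, .inr i, e, ih, hpre =>
      obtain ⟨C, hC, ε0, hε0, H⟩ := ih
      refine ⟨C, hC, ε0, hε0, fun ε hε hε1 => ?_⟩
      obtain ⟨β', h0, hs, hlb, hrow, hcol⟩ := H ε hε hε1
      refine ⟨fun a b => β' a b + (if a = j ∧ b = i then ε else 0), ?_, ?_, ?_, ?_, ?_⟩
      · intro a b
        have h1 := h0 a b
        have h2 : (0:ℝ) ≤ (if a = j ∧ b = i then ε else 0) := by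
          split <;> simp [hε.le]
        dsimp only; linarith
      · intro a b hr
        dsimp only
        rw [hs a b hr, if_neg, zero_add]
        rintro ⟨rfl, rfl⟩; exact hr e
      · intro a b
        have h1 := hlb a b
        have h2 : (0:ℝ) ≤ (if a = j ∧ b = i then ε else 0) := by
          split <;> simp [hε.le]
        dsimp only; linarith
      · intro a
        dsimp only
        rw [Finset.sum_add_distrib, hrow a, delta_row]
        simp only [rowd]
        ring
      · intro b
        dsimp only
        rw [Finset.sum_add_distrib, hcol b, delta_col]
        simp only [cold]
        ring
    | .inr i, .inl j, e, ih, hpre =>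
      obtain ⟨C, hC, ε0, hε0, H⟩ := ih
      have hβpos : (0:ℝ) < β j i := e
      refine ⟨C + 1, by linarith, min ε0 (β j i / (C + 1)), by positivity,
        fun ε hε hε1 => ?_⟩
      obtain ⟨β', h0, hs, hlb, hrow, hcol⟩ := H ε hε (lt_of_lt_of_le hε1 (min_le_left _ _))
      have hεsmall : (C + 1) * ε < β j i := by
        have h2 : ε < β j i / (C + 1) := lt_of_lt_of_le hε1 (min_le_right _ _)
        have h3 : (C+1) * ε < (C+1) * (β j i / (C+1)) :=
          mul_lt_mul_of_pos_left h2 (by linarith)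
        rwa [mul_div_cancel₀ _ (by linarith : (C:ℝ)+1 ≠ 0)] at h3
      refine ⟨fun a b => β' a b - (if a = j ∧ b = i then ε else 0), ?_, ?_, ?_, ?_, ?_⟩
      · intro a b
        dsimp only
        by_cases hab : a = j ∧ b = i
        · obtain ⟨rfl, rfl⟩ := hab
          have h1 := hlb a b
          rw [if_pos ⟨rfl, rfl⟩]
          nlinarith
        · rw [if_neg hab]; have := h0 a b; linarith
      · intro a b hr
        dsimp only
        rw [hs a b hr, if_neg, sub_zero]
        rintro ⟨rfl, rfl⟩
        exact (ne_of_gt hβpos) (hsupp a b hr)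
      · intro a b
        have h1 := hlb a b
        have h2 : (if a = j ∧ b = i then ε else 0) ≤ ε := by
          split <;> simp [hε.le]
        dsimp only; nlinarith
      · intro a
        dsimp only
        rw [Finset.sum_sub_distrib, hrow a, delta_row]
        simp only [rowd]
        ring
      · intro b
        dsimp only
        rw [Finset.sum_sub_distrib, hcol b, delta_col]
        simp only [cold]
        ring



lemma flow_exists (d : ι → ℝ) (s : κ → ℝ) (Rel : ι → κ → Prop)
    (hd : ∀ j, 0 ≤ d j) (hs : ∀ i, 0 ≤ s i)
    (hall : ∀ S : Finset ι, ∑ j ∈ S, d j ≤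
      ∑ i ∈ Finset.univ.filter (fun i => ∃ j ∈ S, Rel j i), s i) :
    ∃ β : ι → κ → ℝ, (∀ j i, 0 ≤ β j i) ∧ (∀ j i, β j i ≠ 0 → Rel j i) ∧
      (∀ j, ∑ i, β j i = d j) ∧ (∀ i, ∑ j, β j i ≤ s i) := by
  classical
  set K : Set (ι → κ → ℝ) := {β | (∀ a b, 0 ≤ β a b) ∧ (∀ a b, ¬ Rel a b → β a b = 0) ∧
    (∀ a, ∑ b, β a b ≤ d a) ∧ (∀ b, ∑ a, β a b ≤ s b)} with hK
  have evalCont : ∀ (a : ι) (b : κ), Continuous (fun β : ι → κ → ℝ => β a b) :=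
    fun a b => (continuous_apply b).comp (continuous_apply a)
  have rowCont : ∀ a : ι, Continuous (fun β : ι → κ → ℝ => ∑ b, β a b) :=
    fun a => continuous_finset_sum _ (fun b _ => evalCont a b)
  have colCont : ∀ b : κ, Continuous (fun β : ι → κ → ℝ => ∑ a, β a b) :=
    fun b => continuous_finset_sum _ (fun a _ => evalCont a b)
  have hKclosed : IsClosed K := by
    have h1 : IsClosed {β : ι → κ → ℝ | ∀ a b, 0 ≤ β a b} := by
      have : {β : ι → κ → ℝ | ∀ a b, 0 ≤ β a b} = ⋂ a, ⋂ b, {β | 0 ≤ β a b} := by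
        ext β; simp [Set.mem_iInter]
      rw [this]
      exact isClosed_iInter fun a => isClosed_iInter fun b =>
        isClosed_le continuous_const (evalCont a b)
    have h2 : IsClosed {β : ι → κ → ℝ | ∀ a b, ¬ Rel a b → β a b = 0} := by
      have : {β : ι → κ → ℝ | ∀ a b, ¬ Rel a b → β a b = 0} =
          ⋂ a, ⋂ b, {β | ¬ Rel a b → β a b = 0} := by ext β; simp [Set.mem_iInter]
      rw [this]
      refine isClosed_iInter fun a => isClosed_iInter fun b => ?_
      by_cases hr : Rel a b
      · simp [hr]
      · simp only [hr, not_false_iff, forall_true_left]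
        exact isClosed_eq (evalCont a b) continuous_const
    have h3 : IsClosed {β : ι → κ → ℝ | ∀ a, ∑ b, β a b ≤ d a} := by
      have : {β : ι → κ → ℝ | ∀ a, ∑ b, β a b ≤ d a} =
          ⋂ a, {β | ∑ b, β a b ≤ d a} := by ext β; simp [Set.mem_iInter]
      rw [this]
      exact isClosed_iInter fun a => isClosed_le (rowCont a) continuous_const
    have h4 : IsClosed {β : ι → κ → ℝ | ∀ b, ∑ a, β a b ≤ s b} := by
      have : {β : ι → κ → ℝ | ∀ b, ∑ a, β a b ≤ s b} =
          ⋂ b, {β | ∑ a, β a b ≤ s b} := by ext β; simp [Set.mem_iInter]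
      rw [this]
      exact isClosed_iInter fun b => isClosed_le (colCont b) continuous_const
    exact h1.inter (h2.inter (h3.inter h4))
  have hKsub : K ⊆ Set.univ.pi fun _ : ι => Set.univ.pi fun b : κ => Set.Icc 0 (s b) := by
    intro β hβ
    obtain ⟨h0, _, _, hcol⟩ := hβ
    intro a _ ; intro b _
    refine ⟨h0 a b, ?_⟩
    calc β a b ≤ ∑ a', β a' b :=
          Finset.single_le_sum (fun a' _ => h0 a' b) (Finset.mem_univ a)
      _ ≤ s b := hcol b
  have hKcomp : IsCompact K := by
    refine IsCompact.of_isClosed_subset ?_ hKclosed hKsub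
    exact isCompact_univ_pi fun _ => isCompact_univ_pi fun b => isCompact_Icc
  have hK0 : (fun _ _ => (0:ℝ)) ∈ K :=
    ⟨fun a b => le_refl 0, fun a b _ => rfl, fun a => by simp [hd a], fun b => by simp [hs b]⟩
  have hKne : K.Nonempty := ⟨_, hK0⟩
  have fcont : Continuous (fun β : ι → κ → ℝ => ∑ a, ∑ b, β a b) :=
    continuous_finset_sum _ (fun a _ => rowCont a)
  obtain ⟨β, hβK, hβmax⟩ := hKcomp.exists_isMaxOn hKne fcont.continuousOn
  obtain ⟨h0, hsupp, hrowle, hcolle⟩ := hβK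
  have hrows : ∀ j0, ∑ i, β j0 i = d j0 := by
    intro j0
    by_contra hne
    have hrlt : ∑ i, β j0 i < d j0 := lt_of_le_of_ne (hrowle j0) hne
    set Reach : ι ⊕ κ → Prop := Relation.ReflTransGen (flowStep Rel β) (.inl j0) with hReach
    have hsat : ∀ i, Reach (.inr i) → ∑ a, β a i = s i := by
      intro i hi
      by_contra hne'
      have hclt : ∑ a, β a i < s i := lt_of_le_of_ne (hcolle i) hne'
      obtain ⟨C, hC, ε0, hε0, H⟩ := pump Rel β j0 h0 hsupp hi
      set m : ℝ := min ε0 (min (d j0 - ∑ i, β j0 i) (s i - ∑ a, β a i)) with hm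
      set ε : ℝ := m / 2 with hεdef
      have hm1 : m ≤ ε0 := min_le_left _ _
      have hm2 : m ≤ d j0 - ∑ i, β j0 i := (min_le_right _ _).trans (min_le_left _ _)
      have hm3 : m ≤ s i - ∑ a, β a i := (min_le_right _ _).trans (min_le_right _ _)
      have hmpos : 0 < m := lt_min hε0 (lt_min (by linarith) (by linarith))
      have hεpos : 0 < ε := by rw [hεdef]; linarith
      have hεlt : ε < ε0 := by rw [hεdef]; linarith
      obtain ⟨β', h0', hs', hlb', hrow', hcol'⟩ := H ε hεpos hεlt
      have hβ'K : β' ∈ K := by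
        refine ⟨h0', hs', ?_, ?_⟩
        · intro a
          rw [hrow' a]
          simp only [rowd]
          by_cases ha : a = j0
          · subst ha; rw [if_pos rfl]; rw [hεdef]; linarith
          · rw [if_neg ha]; have := hrowle a; linarith
        · intro b
          rw [hcol' b]
          simp only [cold]
          by_cases hb : b = i
          · subst hb; rw [if_pos rfl]; rw [hεdef]; linarith
          · rw [if_neg hb]; have := hcolle b; linarith
      have hgt : ∑ a, ∑ b, β a b < ∑ a, ∑ b, β' a b := by
        have hr : ∀ a, ∑ b, β' a b = ∑ b, β a b + (if a = j0 then ε else 0) := by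
          intro a; rw [hrow' a]; simp only [rowd]
        rw [Finset.sum_congr rfl (fun a _ => hr a), Finset.sum_add_distrib,
          Finset.sum_ite_eq' Finset.univ j0 (fun _ => ε)]
        simp [hεpos]
      exact absurd (hβmax hβ'K) (not_le.mpr hgt)
    set Sset : Finset ι := Finset.univ.filter (fun j => Reach (.inl j)) with hSset
    set Tset : Finset κ := Finset.univ.filter (fun i => Reach (.inr i)) with hTset
    have hj0 : j0 ∈ Sset := by
      simp only [hSset, Finset.mem_filter, Finset.mem_univ, true_and, hReach]
      exact Relation.ReflTransGen.refl
    have hTsub : Finset.univ.filter (fun i => ∃ j ∈ Sset, Rel j i) ⊆ Tset := by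
      intro i hi
      simp only [Finset.mem_filter, Finset.mem_univ, true_and, hTset] at hi ⊢
      obtain ⟨j, hj, hrel⟩ := hi
      simp only [hSset, Finset.mem_filter, Finset.mem_univ, true_and] at hj
      exact hj.tail hrel
    have key1 : ∑ i ∈ Tset, s i ≤ ∑ j ∈ Sset, ∑ i ∈ Tset, β j i := by
      have step1 : ∀ i ∈ Tset, s i = ∑ a ∈ Sset, β a i := by
        intro i hi
        simp only [hTset, Finset.mem_filter, Finset.mem_univ, true_and] at hi
        rw [← hsat i hi]
        refine (Finset.sum_subset (Finset.subset_univ Sset) ?_).symm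
        intro a _ ha
        by_contra hne''
        have : (0:ℝ) < β a i := lt_of_le_of_ne (h0 a i) (Ne.symm hne'')
        have : Reach (.inl a) := hi.tail this
        exact ha (by simp [hSset, this])
      rw [Finset.sum_congr rfl step1, Finset.sum_comm]
    have key2 : ∑ j ∈ Sset, ∑ i ∈ Tset, β j i ≤ ∑ j ∈ Sset, ∑ i, β j i :=
      Finset.sum_le_sum fun j _ =>
        Finset.sum_le_sum_of_subset_of_nonneg (Finset.subset_univ _)
          (fun i _ _ => h0 j i)
    have key3 : ∑ j ∈ Sset, ∑ i, β j i < ∑ j ∈ Sset, d j :=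
      Finset.sum_lt_sum (fun j _ => hrowle j) ⟨j0, hj0, hrlt⟩
    have key4 : ∑ j ∈ Sset, d j ≤ ∑ i ∈ Tset, s i :=
      (hall Sset).trans (Finset.sum_le_sum_of_subset_of_nonneg hTsub fun i _ _ => hs i)
    linarith
  exact ⟨β, h0, fun j i h => by_contra fun hr => h (hsupp j i hr), hrows, hcolle⟩

end Flow


section Sched

variable {J : Type*} [Fintype J] {r p : J → ℝ} {σ : ℝ → J → ℝ}

lemma IsSchedule.le_one (hσ : IsSchedule r p σ) (u : ℝ) (j : J) : σ u j ≤ 1 :=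
  le_trans (Finset.single_le_sum (fun i _ => hσ.nonneg u i) (Finset.mem_univ j))
    (hσ.sum_le_one u)

lemma IsSchedule.intInt (hσ : IsSchedule r p σ) (j : J) (a b : ℝ) :
    IntervalIntegrable (fun u => σ u j) volume a b := by
  rw [intervalIntegrable_iff]
  apply Measure.integrableOn_of_bounded (M := 1)
  · rw [Set.uIoc]; exact measure_Ioc_lt_top.ne
  · exact (hσ.meas j).aestronglyMeasurable
  · refine Filter.Eventually.of_forall fun u => ?_
    rw [Real.norm_eq_abs, abs_of_nonneg (hσ.nonneg u j)]
    exact hσ.le_one u j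

lemma workDone_sub (hσ : IsSchedule r p σ) (j : J) (a b : ℝ) :
    workDone σ j b - workDone σ j a = ∫ v in a..b, σ v j :=
  intervalIntegral.integral_interval_sub_left (hσ.intInt j 0 b) (hσ.intInt j 0 a)

lemma workDone_mono (hσ : IsSchedule r p σ) (j : J) {a b : ℝ} (hab : a ≤ b) :
    workDone σ j a ≤ workDone σ j b := by
  have h := workDone_sub hσ j a b
  have h2 : 0 ≤ ∫ v in a..b, σ v j :=
    intervalIntegral.integral_nonneg hab (fun u _ => hσ.nonneg u j)
  linarith

lemma workDone_zero (j : J) : workDone σ j 0 = 0 :=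
  intervalIntegral.integral_same

lemma workDone_nonneg (hσ : IsSchedule r p σ) (j : J) {u : ℝ} (hu : 0 ≤ u) :
    0 ≤ workDone σ j u := by
  have := workDone_mono hσ j hu
  rwa [workDone_zero] at this

lemma workDone_nonpos (hσ : IsSchedule r p σ) (j : J) {u : ℝ} (hu : u ≤ 0) :
    workDone σ j u ≤ 0 := by
  have := workDone_mono hσ j hu
  rwa [workDone_zero] at this

lemma workDone_continuous (hσ : IsSchedule r p σ) (j : J) :
    Continuous (workDone σ j) :=
  intervalIntegral.continuous_primitive (fun a b => hσ.intInt j a b) 0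

lemma workDone_zero_of_le_release (hσ : IsSchedule r p σ) (j : J) {u : ℝ}
    (h0 : 0 ≤ u) (hu : u ≤ r j) : workDone σ j u = 0 := by
  have h1 : ∀ᵐ (v : ℝ), v ≠ r j := by
    rw [MeasureTheory.ae_iff]
    have : {v : ℝ | ¬ v ≠ r j} = {r j} := by ext v; simp
    rw [this]
    exact Real.volume_singleton
  have hae : ∀ᵐ v ∂(volume.restrict (Set.Ioc 0 u)), σ v j = 0 := by
    rw [MeasureTheory.ae_restrict_iff' measurableSet_Ioc]
    filter_upwards [h1] with v hv hmem
    rcases lt_or_ge v (r j) with h | h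
    · exact hσ.zero_before_release v j h
    · exact absurd (le_antisymm (hmem.2.trans hu) h) hv
  rw [workDone, intervalIntegral.integral_of_le h0]
  rw [MeasureTheory.integral_congr_ae hae]
  simp

lemma cTime_nonneg (hσ : IsSchedule r p σ) (hp : 0 < p j) :
    (0 : EReal) ≤ cTime p σ j := by
  apply le_sInf
  rintro x ⟨v, hv, rfl⟩
  have hv0 : 0 ≤ v := by
    by_contra h
    push_neg at h
    have := workDone_nonpos hσ j h.le
    simp only [Set.mem_setOf_eq] at hv
    linarith
  show (0:EReal) ≤ (v:EReal)
  exact_mod_cast hv0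

lemma workDone_eq_of_cTime_le (hσ : IsSchedule r p σ) {j : J} (hp : 0 < p j)
    {c : ℝ} (h : cTime p σ j ≤ (c : EReal)) : workDone σ j c = p j := by
  set F := {v : ℝ | workDone σ j v = p j} with hF
  have hFne : F.Nonempty := by
    by_contra hne
    rw [Set.not_nonempty_iff_eq_empty] at hne
    rw [cTime, ← hF, hne, Set.image_empty, sInf_empty] at h
    exact (EReal.coe_ne_top c) (top_le_iff.mp h)
  have hFcl : IsClosed F := isClosed_eq (workDone_continuous hσ j) continuous_const
  have hFbdd : BddBelow F := by
    refine ⟨0, fun v hv => ?_⟩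
    by_contra h0
    push_neg at h0
    have := workDone_nonpos hσ j h0.le
    have hv' : workDone σ j v = p j := hv
    linarith
  have hc0F : sInf F ∈ F := hFcl.csInf_mem hFne hFbdd
  have hcoe : cTime p σ j = ((sInf F : ℝ) : EReal) := by
    apply le_antisymm
    · exact sInf_le ⟨sInf F, hc0F, rfl⟩
    · apply le_sInf
      rintro x ⟨v, hv, rfl⟩
      exact EReal.coe_le_coe_iff.mpr (csInf_le hFbdd hv)
  rw [hcoe] at h
  have hc0c : sInf F ≤ c := EReal.coe_le_coe_iff.mp h
  have h1 := workDone_mono hσ j hc0c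
  have h2 := hσ.workDone_le c j
  have h3 : workDone σ j (sInf F) = p j := hc0F
  linarith

lemma cTime_le_of_not_avail (hrj : r j ≤ t) (h : ¬ availAt r p σ t j) :
    cTime p σ j ≤ (t : EReal) := by
  rw [availAt] at h
  push_neg at h
  exact h hrj

lemma sigma_ae_zero_after (hσ : IsSchedule r p σ) {j : J} (hp : 0 < p j)
    {c t : ℝ} (hct : c ≤ t) (h : cTime p σ j ≤ (c : EReal)) :
    ∀ᵐ v ∂(volume.restrict (Set.Ioc c t)), σ v j = 0 := by
  have h1 : workDone σ j c = p j := workDone_eq_of_cTime_le hσ hp h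
  have h2 : workDone σ j t = p j :=
    workDone_eq_of_cTime_le hσ hp (h.trans (EReal.coe_le_coe_iff.mpr hct))
  have hint : ∫ v in c..t, σ v j = 0 := by
    have := workDone_sub hσ j c t
    rw [h1, h2] at this
    linarith
  have := (intervalIntegral.integral_eq_zero_iff_of_le_of_nonneg_ae hct
    (Filter.Eventually.of_forall fun v => hσ.nonneg v j) (hσ.intInt j c t)).mp hint
  filter_upwards [this] with v hv
  exact hv

lemma avail_nc_or_cl {α : ℝ} {u : ℝ} {j : J} (h : availAt r p σ u j) :
    ncAt r p α σ u j ∨ clAt r p α σ u j :=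
  (le_or_gt (workDone σ j u) (α * p j)).imp (fun h' => ⟨h, h'⟩) (fun h' => ⟨h, h'⟩)

lemma cTime_ne_bot (hσ : IsSchedule r p σ) (hp : 0 < p j) : cTime p σ j ≠ ⊥ :=
  fun h => by simpa [h] using cTime_nonneg hσ hp (j := j)

lemma lifeEnd_le (hσ : IsSchedule r p σ) (hp : 0 < p j) {t : ℝ} (ht : 0 ≤ t) :
    lifeEnd p σ t j ≤ t := by
  have hmin : min (cTime p σ j) (t : EReal) ≤ (t : EReal) := min_le_right _ _
  have hb : min (cTime p σ j) (t : EReal) ≠ ⊥ := by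
    intro hbot
    rcases min_eq_iff.mp hbot with h | h
    · exact cTime_ne_bot hσ hp h.1
    · exact (EReal.coe_ne_bot t) h.1
  calc lifeEnd p σ t j ≤ ((t : EReal)).toReal :=
        EReal.toReal_le_toReal hmin hb (EReal.coe_ne_top t)
    _ = t := EReal.toReal_coe t

lemma le_lifeEnd (hσ : IsSchedule r p σ) (hp : 0 < p j) {t u : ℝ}
    (hu1 : (u : EReal) < cTime p σ j) (hu2 : u ≤ t) : u ≤ lifeEnd p σ t j := by
  have hmin : (u : EReal) ≤ min (cTime p σ j) (t : EReal) :=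
    le_min hu1.le (EReal.coe_le_coe_iff.mpr hu2)
  have hnt : min (cTime p σ j) (t : EReal) ≠ ⊤ := by
    intro htop
    rcases min_eq_iff.mp htop with h | h
    · exact (EReal.coe_ne_top t) (top_le_iff.mp (h.1 ▸ h.2))
    · exact (EReal.coe_ne_top t) h.1
  calc u = ((u : EReal)).toReal := (EReal.toReal_coe u).symm
    _ ≤ lifeEnd p σ t j := EReal.toReal_le_toReal hmin (EReal.coe_ne_bot u) hnt

lemma lt_cTime_of_lt_lifeEnd (hσ : IsSchedule r p σ) (hp : 0 < p j) {t u : ℝ}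
    (ht : 0 ≤ t) (hu : u < lifeEnd p σ t j) :
    (u : EReal) < cTime p σ j ∧ u < t := by
  have hb : min (cTime p σ j) (t : EReal) ≠ ⊥ := by
    intro hbot
    rcases min_eq_iff.mp hbot with h | h
    · exact cTime_ne_bot hσ hp h.1
    · exact (EReal.coe_ne_bot t) h.1
  have hnt : min (cTime p σ j) (t : EReal) ≠ ⊤ := by
    intro htop
    rcases min_eq_iff.mp htop with h | h
    · exact (EReal.coe_ne_top t) (top_le_iff.mp (h.1 ▸ h.2))
    · exact (EReal.coe_ne_top t) h.1
  have hcoe : (u : EReal) < min (cTime p σ j) (t : EReal) := by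
    rw [lifeEnd] at hu
    have := EReal.coe_lt_coe_iff.mpr hu
    rwa [EReal.coe_toReal hnt hb] at this
  exact ⟨hcoe.trans_le (min_le_left _ _),
    EReal.coe_lt_coe_iff.mp (hcoe.trans_le (min_le_right _ _))⟩

lemma lifeEnd_eq_of_avail {t : ℝ} (h : availAt r p σ t j) : lifeEnd p σ t j = t := by
  rw [lifeEnd, min_eq_right h.2.le, EReal.toReal_coe]

end Sched

section Hall

variable {J : Type*} [Fintype J]

set_option maxHeartbeats 2000000 in
lemma hall_ineq {r p : J → ℝ} {α : ℝ} {σS σO : ℝ → J → ℝ}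
    (hinst : IsInstance r p α) (hS : IsSchedule r p σS) (hSni : NonIdling r p σS)
    (hO : IsSchedule r p σO) (t : ℝ) (ht : 0 ≤ t)
    (S : Finset J) (hSmem : ∀ j ∈ S, availAt r p σS t j ∧ ¬ availAt r p σO t j) :
    ∑ j ∈ S, remT p σS j t ≤
      ∑ i ∈ Finset.univ.filter
        (fun i => availAt r p σO t i ∧ ∃ j ∈ S, reaches r p α σS t j i),
        workDone σS i t := by
  rcases S.eq_empty_or_nonempty with rfl | hSne
  · simp only [Finset.sum_empty]
    exact Finset.sum_nonneg fun i _ => workDone_nonneg hS i ht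
  set Q : Finset J := Finset.univ.filter (fun i => ∃ j ∈ S, reaches r p α σS t j i)
    with hQdef
  have hQmem : ∀ i, i ∈ Q ↔ ∃ j ∈ S, reaches r p α σS t j i := by
    intro i; simp [hQdef]
  have hQne : Q.Nonempty := by
    obtain ⟨j, hj⟩ := hSne
    exact ⟨j, (hQmem j).mpr ⟨j, hj, Relation.ReflTransGen.refl⟩⟩
  set U : Set ℝ := ⋃ i ∈ Q, lifetime r p σS t i with hUdef
  -- Lemma A
  have lemA : ∀ i ∈ Q, r i ≤ t ∧ Set.Icc (r i) t ⊆ U := by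
    have H : ∀ j ∈ S, ∀ i, reaches r p α σS t j i →
        r i ≤ t ∧ Set.Icc (r i) t ⊆ U := by
      intro j hjS i hreach
      induction hreach with
      | refl =>
        have havail := (hSmem j hjS).1
        have hlife : lifetime r p σS t j = Set.Icc (r j) t := by
          rw [lifetime, lifeEnd_eq_of_avail havail]
        refine ⟨havail.1, ?_⟩
        rw [← hlife]
        exact Set.subset_biUnion_of_mem ((hQmem j).mpr ⟨j, hjS, Relation.ReflTransGen.refl⟩)
      | @tail b c hab e ih =>
        have hcQ : c ∈ Q := (hQmem c).mpr ⟨j, hjS, hab.tail e⟩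
        obtain ⟨u, hu, hproc, havail⟩ :
            ∃ u ∈ lifetime r p σS t b, procAt σS u c ∧ availAt r p σS u c := by
          rcases e with ⟨u, hu, hproc, hnc⟩ | ⟨u, hu, hproc, hcl⟩
          · exact ⟨u, hu, hproc, hnc.1⟩
          · exact ⟨u, hu, hproc, hcl.1⟩
        have hub : r b ≤ u := hu.1
        have hut : u ≤ t := hu.2.trans (lifeEnd_le hS (hinst.p_pos b) ht)
        have hrc : r c ≤ u := havail.1
        refine ⟨hrc.trans hut, ?_⟩
        have hsplit : Set.Icc (r c) t = Set.Icc (r c) u ∪ Set.Icc u t :=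
          (Set.Icc_union_Icc_eq_Icc hrc hut).symm
        rw [hsplit]
        apply Set.union_subset
        · have hle : u ≤ lifeEnd p σS t c := le_lifeEnd hS (hinst.p_pos c) havail.2 hut
          have : Set.Icc (r c) u ⊆ lifetime r p σS t c :=
            Set.Icc_subset_Icc le_rfl hle
          exact this.trans (Set.subset_biUnion_of_mem hcQ)
        · exact (Set.Icc_subset_Icc hub le_rfl).trans ih.2
    intro i hi
    obtain ⟨j, hjS, hreach⟩ := (hQmem i).mp hi
    exact H j hjS i hreach
  set m : ℝ := Q.inf' hQne r with hmdef
  have hm_le : ∀ i ∈ Q, m ≤ r i := fun i hi => Finset.inf'_le r hi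
  obtain ⟨i0, hi0Q, hi0⟩ := Finset.exists_mem_eq_inf' hQne r
  have hmt : m ≤ t := by rw [hmdef, hi0]; exact (lemA i0 hi0Q).1
  have hm0 : 0 ≤ m := by rw [hmdef, hi0]; exact hinst.r_nonneg i0
  have hX : U = Set.Icc m t := by
    apply Set.Subset.antisymm
    · refine Set.iUnion₂_subset fun i hi => ?_
      exact Set.Icc_subset_Icc (hm_le i hi) (lifeEnd_le hS (hinst.p_pos i) ht)
    · rw [hmdef, hi0]
      exact (lemA i0 hi0Q).2
  -- σS side
  have hSers : ∀ i ∈ Q, workDone σS i t = ∫ v in m..t, σS v i := by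
    intro i hi
    have h0 : workDone σS i m = 0 := workDone_zero_of_le_release hS i hm0 (hm_le i hi)
    have := workDone_sub hS i m t
    rw [h0] at this
    linarith
  have hbadset : ∀ᵐ (v : ℝ), ∀ i : J,
      (cTime p σS i ≤ (t : EReal) ∧
        v ∈ Set.Ioc ((cTime p σS i).toReal) t) → σS v i = 0 := by
    rw [MeasureTheory.ae_all_iff]
    intro i
    by_cases hc : cTime p σS i ≤ (t : EReal)
    · have hb : cTime p σS i ≠ ⊥ := cTime_ne_bot hS (hinst.p_pos i)
      have hnt : cTime p σS i ≠ ⊤ := fun h =>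
        (EReal.coe_ne_top t) (top_le_iff.mp (h ▸ hc))
      have hct : (cTime p σS i).toReal ≤ t := by
        have := EReal.toReal_le_toReal hc hb (EReal.coe_ne_top t)
        rwa [EReal.toReal_coe] at this
      have hcc : cTime p σS i ≤ (((cTime p σS i).toReal : ℝ) : EReal) := by
        rw [EReal.coe_toReal hnt hb]
      have := sigma_ae_zero_after hS (hinst.p_pos i) hct hcc
      rw [MeasureTheory.ae_restrict_iff' measurableSet_Ioc] at this
      filter_upwards [this] with v hv ⟨_, hmem⟩
      exact hv hmem
    · filter_upwards with v hv
      exact absurd hv.1 hc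
  set E : Finset ℝ := (Finset.univ.image (fun i : J => (cTime p σS i).toReal)) ∪
      (Finset.univ.image (lifeEnd p σS t)) with hEdef
  have hfinset : ∀ᵐ (v : ℝ), v ∉ E := by
    rw [MeasureTheory.ae_iff]
    have he : {a : ℝ | ¬ a ∉ E} = (E : Set ℝ) := by ext a; simp
    rw [he]
    exact (E.finite_toSet).measure_zero _
  have hae1 : (fun _ : ℝ => (1:ℝ)) ≤ᵐ[volume.restrict (Set.Icc m t)]
      fun v => ∑ i ∈ Q, σS v i := by
    show ∀ᵐ v ∂(volume.restrict (Set.Icc m t)), (1:ℝ) ≤ ∑ i ∈ Q, σS v i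
    rw [MeasureTheory.ae_restrict_iff' measurableSet_Icc]
    filter_upwards [hbadset, hfinset] with v hbad hfin hmem
    -- find an available job in Q at v
    have hvU : v ∈ U := hX ▸ hmem
    obtain ⟨i', hi'Q, hvlife⟩ : ∃ i' ∈ Q, v ∈ lifetime r p σS t i' := by
      simpa [hUdef] using hvU
    have hvne : v ≠ lifeEnd p σS t i' := by
      intro h
      apply hfin
      rw [hEdef, Finset.mem_union]
      exact Or.inr (Finset.mem_image.mpr ⟨i', Finset.mem_univ i', h.symm⟩)
    have hvlt : v < lifeEnd p σS t i' := lt_of_le_of_ne hvlife.2 hvne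
    obtain ⟨hvc, hvt⟩ := lt_cTime_of_lt_lifeEnd hS (hinst.p_pos i') ht hvlt
    have havail' : availAt r p σS v i' := ⟨hvlife.1, hvc⟩
    have hfull : ∑ i, σS v i = 1 := hSni v ⟨i', havail'⟩
    have hQonly : ∀ i'' ∈ Finset.univ, i'' ∉ Q → σS v i'' = 0 := by
      intro i'' _ hi''
      by_contra hne
      have hpos : 0 < σS v i'' := lt_of_le_of_ne (hS.nonneg v i'') (Ne.symm hne)
      have hri'' : r i'' ≤ v := by
        by_contra hlt
        push_neg at hlt
        exact hne (hS.zero_before_release v i'' hlt)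
      have hvcT : (v : EReal) < cTime p σS i'' := by
        by_contra hge
        push_neg at hge
        have hct : cTime p σS i'' ≤ (t : EReal) :=
          hge.trans (EReal.coe_le_coe_iff.mpr hvt.le)
        have hb : cTime p σS i'' ≠ ⊥ := cTime_ne_bot hS (hinst.p_pos i'')
        have htr : (cTime p σS i'').toReal ≤ v := by
          have := EReal.toReal_le_toReal hge hb (EReal.coe_ne_top v)
          rwa [EReal.toReal_coe] at this
        have hvne' : v ≠ (cTime p σS i'').toReal := by
          intro h
          apply hfin
          rw [hEdef, Finset.mem_union]
          exact Or.inl (Finset.mem_image.mpr ⟨i'', Finset.mem_univ i'', h.symm⟩)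
        have : (cTime p σS i'').toReal < v := lt_of_le_of_ne htr (fun h => hvne' h.symm)
        exact hne (hbad i'' ⟨hct, this, hvt.le⟩)
      have havail'' : availAt r p σS v i'' := ⟨hri'', hvcT⟩
      have hedge : borrowEdge r p α σS t i' i'' := by
        rcases avail_nc_or_cl (α := α) havail'' with h | h
        · exact Or.inl ⟨v, hvlife, hpos, h⟩
        · exact Or.inr ⟨v, hvlife, hpos, h⟩
      obtain ⟨j, hjS, hreach⟩ := (hQmem i').mp hi'Q
      exact hi'' ((hQmem i'').mpr ⟨j, hjS, hreach.tail hedge⟩)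
    have : ∑ i ∈ Q, σS v i = ∑ i, σS v i :=
      Finset.sum_subset (Finset.subset_univ Q) hQonly
    rw [this, hfull]
  have hSsum : t - m ≤ ∑ i ∈ Q, workDone σS i t := by
    rw [Finset.sum_congr rfl hSers]
    rw [← intervalIntegral.integral_finset_sum (fun i _ => hS.intInt i m t)]
    have h1 : ∫ v in m..t, (1:ℝ) = t - m := by simp
    rw [← h1]
    have hint : IntervalIntegrable (fun x => ∑ i ∈ Q, σS x i) volume m t := by
      have h := IntervalIntegrable.sum Q (fun i _ => hS.intInt i m t)
      have he : (∑ i ∈ Q, fun u => σS u i) = fun x => ∑ i ∈ Q, σS x i := by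
        funext x; simp
      rwa [he] at h
    exact intervalIntegral.integral_mono_ae_restrict hmt intervalIntegrable_const hint hae1
  -- σO side
  set Q' : Finset J := Q.filter (fun i => ¬ availAt r p σO t i) with hQ'def
  have hOsum : ∑ i ∈ Q', p i ≤ t - m := by
    have hO1 : ∀ i ∈ Q', p i = ∫ v in m..t, σO v i := by
      intro i hi
      rw [Finset.mem_filter] at hi
      have hrit : r i ≤ t := (lemA i hi.1).1
      have hcT : cTime p σO i ≤ (t : EReal) := cTime_le_of_not_avail hrit hi.2
      have hwt : workDone σO i t = p i := workDone_eq_of_cTime_le hO (hinst.p_pos i) hcT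
      have hwm : workDone σO i m = 0 :=
        workDone_zero_of_le_release hO i hm0 (hm_le i hi.1)
      have := workDone_sub hO i m t
      rw [hwt, hwm] at this
      linarith
    rw [Finset.sum_congr rfl hO1]
    rw [← intervalIntegral.integral_finset_sum (fun i _ => hO.intInt i m t)]
    have h1 : ∫ v in m..t, (1:ℝ) = t - m := by simp
    rw [← h1]
    have hint : IntervalIntegrable (fun x => ∑ i ∈ Q', σO x i) volume m t := by
      have h := IntervalIntegrable.sum Q' (fun i _ => hO.intInt i m t)
      have he : (∑ i ∈ Q', fun u => σO u i) = fun x => ∑ i ∈ Q', σO x i := by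
        funext x; simp
      rwa [he] at h
    apply intervalIntegral.integral_mono_on hmt hint intervalIntegrable_const
    intro v _
    calc ∑ i ∈ Q', σO v i ≤ ∑ i, σO v i :=
        Finset.sum_le_sum_of_subset_of_nonneg (Finset.subset_univ Q')
          (fun i _ _ => hO.nonneg v i)
      _ ≤ 1 := hO.sum_le_one v
  -- combine
  have hSQ' : S ⊆ Q' := by
    intro j hj
    rw [hQ'def, Finset.mem_filter]
    exact ⟨(hQmem j).mpr ⟨j, hj, Relation.ReflTransGen.refl⟩, (hSmem j hj).2⟩
  have step1 : ∑ j ∈ S, remT p σS j t ≤ ∑ i ∈ Q', (p i - workDone σS i t) := by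
    apply Finset.sum_le_sum_of_subset_of_nonneg hSQ'
    intro i _ _
    have := hS.workDone_le t i
    simp only [remT]
    linarith
  have step2 : ∑ i ∈ Q', (p i - workDone σS i t)
      = ∑ i ∈ Q', p i - ∑ i ∈ Q', workDone σS i t := Finset.sum_sub_distrib _ _
  have hQ'Q : Q' ⊆ Q := Finset.filter_subset _ _
  have step3 : ∑ i ∈ Q, workDone σS i t
      = ∑ i ∈ Q \ Q', workDone σS i t + ∑ i ∈ Q', workDone σS i t :=
    (Finset.sum_sdiff hQ'Q).symm
  have step4 : ∑ i ∈ Q \ Q', workDone σS i t =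
      ∑ i ∈ Finset.univ.filter
        (fun i => availAt r p σO t i ∧ ∃ j ∈ S, reaches r p α σS t j i),
        workDone σS i t := by
    apply Finset.sum_congr _ (fun _ _ => rfl)
    ext i
    constructor
    · intro h
      rw [Finset.mem_sdiff] at h
      obtain ⟨hiQ, hiQ'⟩ := h
      have hnn : ¬ ¬ availAt r p σO t i := fun hna =>
        hiQ' (by rw [hQ'def, Finset.mem_filter]; exact ⟨hiQ, hna⟩)
      rw [Finset.mem_filter]
      exact ⟨Finset.mem_univ i, not_not.mp hnn, (hQmem i).mp hiQ⟩
    · intro h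
      rw [Finset.mem_filter] at h
      obtain ⟨_, hav, hex⟩ := h
      rw [Finset.mem_sdiff]
      refine ⟨(hQmem i).mpr hex, ?_⟩
      rw [hQ'def, Finset.mem_filter]
      rintro ⟨_, hna⟩
      exact hna hav
  linarith

end Hall

/-- **Borrowing values.** For a non-idling schedule `σS`, any
schedule `σO` and a reference time `t`, there are nonnegative borrowing values
`β j i` supported on pairs `j ∈ A(t)∖O(t)`, `i ∈ O(t)` with `i ∈ R_j`, whose
row sums equal `p_j(t)` and whose column sums are at most `y_i(t)`. -/
theorem stmt6 {J : Type*} [Fintype J] {r p : J → ℝ} {α : ℝ} {σS σO : ℝ → J → ℝ}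
    (hinst : IsInstance r p α) (hS : IsSchedule r p σS) (hSni : NonIdling r p σS)
    (hO : IsSchedule r p σO) (t : ℝ) (ht : 0 ≤ t) :
    ∃ β : J → J → ℝ,
      (∀ j i, 0 ≤ β j i) ∧
      (∀ j i, β j i ≠ 0 →
        availAt r p σS t j ∧ ¬ availAt r p σO t j ∧ availAt r p σO t i ∧
          reaches r p α σS t j i) ∧
      (∀ j, availAt r p σS t j → ¬ availAt r p σO t j →
        ∑ i ∈ Finset.univ.filter (fun i => availAt r p σO t i), β j i
          = remT p σS j t) ∧
      (∀ i, availAt r p σO t i →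
        ∑ j ∈ Finset.univ.filter
            (fun j => availAt r p σS t j ∧ ¬ availAt r p σO t j), β j i
          ≤ workDone σS i t) := by
  classical
  obtain ⟨β, hβ0, hβsupp, hβrow, hβcol⟩ :=
    flow_exists
      (fun j => if availAt r p σS t j ∧ ¬ availAt r p σO t j then remT p σS j t else 0)
      (fun i => if availAt r p σO t i then workDone σS i t else 0)
      (fun j i => (availAt r p σS t j ∧ ¬ availAt r p σO t j) ∧
        availAt r p σO t i ∧ reaches r p α σS t j i)
      (fun j => by
        split
        · next h => have := hS.workDone_le t j; simp only [remT]; linarith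
        · exact le_rfl)
      (fun i => by
        split
        · exact workDone_nonneg hS i ht
        · exact le_rfl)
      (fun S => by
        have h1 : ∑ j ∈ S, (if availAt r p σS t j ∧ ¬ availAt r p σO t j
            then remT p σS j t else 0)
            = ∑ j ∈ S.filter (fun j => availAt r p σS t j ∧ ¬ availAt r p σO t j),
              remT p σS j t := (Finset.sum_filter _ _).symm
        rw [h1]
        have h2 := hall_ineq hinst hS hSni hO t ht
          (S.filter (fun j => availAt r p σS t j ∧ ¬ availAt r p σO t j))
          (fun j hj => (Finset.mem_filter.mp hj).2)
        refine h2.trans ?_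
        have h3 : ∀ i ∈ Finset.univ.filter (fun i => availAt r p σO t i ∧
            ∃ j ∈ S.filter (fun j => availAt r p σS t j ∧ ¬ availAt r p σO t j),
              reaches r p α σS t j i),
            workDone σS i t = (if availAt r p σO t i then workDone σS i t else 0) := by
          intro i hi
          rw [if_pos (Finset.mem_filter.mp hi).2.1]
        rw [Finset.sum_congr rfl h3]
        apply Finset.sum_le_sum_of_subset_of_nonneg
        · intro i hi
          simp only [Finset.mem_filter, Finset.mem_univ, true_and] at hi ⊢
          obtain ⟨hav, j, hjmem, hr⟩ := hi
          exact ⟨j, hjmem.1, hjmem.2, hav, hr⟩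
        · intro i _ _
          split
          · exact workDone_nonneg hS i ht
          · exact le_rfl)
  refine ⟨β, hβ0, ?_, ?_, ?_⟩
  · intro j i h
    obtain ⟨⟨h1, h2⟩, h3, h4⟩ := hβsupp j i h
    exact ⟨h1, h2, h3, h4⟩
  · intro j hjS hjO
    have hfull : ∑ i ∈ Finset.univ.filter (fun i => availAt r p σO t i), β j i
        = ∑ i, β j i := by
      apply Finset.sum_subset (Finset.filter_subset _ _)
      intro i _ hi
      by_contra hne
      exact hi (Finset.mem_filter.mpr ⟨Finset.mem_univ i, (hβsupp j i hne).2.1⟩)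
    rw [hfull, hβrow j, if_pos ⟨hjS, hjO⟩]
  · intro i hi
    calc ∑ j ∈ Finset.univ.filter
          (fun j => availAt r p σS t j ∧ ¬ availAt r p σO t j), β j i
        ≤ ∑ j, β j i :=
          Finset.sum_le_sum_of_subset_of_nonneg (Finset.filter_subset _ _)
            (fun j _ _ => hβ0 j i)
      _ ≤ (if availAt r p σO t i then workDone σS i t else 0) := hβcol i
      _ = workDone σS i t := if_pos hi
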